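/- Let (W,S) be a Coxeter system. Two irreducible spherical subsets T₁, T₂ ⊆ S form a nested pair (i.e., a 1-simplex of the subdivision L_⊘) if and only if they are either comparable (T₁ ⊆ T₂ or T₂ ⊆ T₁) or orthogonal (T₁ ∩ T₂ = ∅, T₁ ∪ T₂ is spherical, and m_{st} = 2 for all s ∈ T₁, t ∈ T₂). -/

import Mathlib

/-- The Coxeter diagram of a Coxeter matrix. -/
def coxeterDiagram {B : Type*} (M : CoxeterMatrix B) : SimpleGraph B where
  Adj i j := i ≠ j ∧ M i j ≠ 2
  symm := by
    refine ⟨?_⟩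
    intro i j h
    exact ⟨h.1.symm, by rw [M.symmetric]; exact h.2⟩
  loopless := by refine ⟨?_⟩; intro i h; exact h.1 rfl

variable {B W : Type*} [Group W] [DecidableEq B] {M : CoxeterMatrix B}

/-- `T` is a spherical subset: the special subgroup `W_T` is finite. -/
def IsSpherical (cs : CoxeterSystem M W) (T : Finset B) : Prop :=
  Finite (Subgroup.closure (cs.simple '' (T : Set B)))

/-- `T` is irreducible: its Coxeter diagram is connected. -/
def DiagramIrreducible (M : CoxeterMatrix B) (T : Finset B) : Prop :=
  ((coxeterDiagram M).induce {b | b ∈ T}).Connected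

/-- The support of a family of subsets of `S`: the union of its members. -/
def familySupport (α : Finset (Finset B)) : Finset B := α.sup id

/-- The maximal elements of a family of subsets. -/
def maxElems (α : Finset (Finset B)) : Finset (Finset B) :=
  α.filter fun T => ∀ T' ∈ α, ¬ T ⊂ T'

/-- A family `α` of irreducible spherical subsets is *nested* if its support `sp(α)` is
spherical, its maximal elements are exactly the irreducible components of `sp(α)` (they are
irreducible, pairwise disjoint and pairwise orthogonal with respect to `M`, with union
`sp(α)`), and for each maximal element `T` the subfamily `α_{<T}` is nested. -/
def Nested (cs : CoxeterSystem M W) (α : Finset (Finset B)) : Prop :=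
  α = ∅ ∨
    (IsSpherical cs (familySupport α) ∧
     (∀ T ∈ maxElems α, DiagramIrreducible M T) ∧
     (∀ T ∈ maxElems α, ∀ T' ∈ maxElems α, T ≠ T' →
        Disjoint T T' ∧ ∀ s ∈ T, ∀ t ∈ T', M s t = 2) ∧
     (maxElems α).sup id = familySupport α ∧
     (∀ T ∈ maxElems α, Nested cs (α.filter fun T' => T' ⊂ T)))
termination_by α.card
decreasing_by
  refine Finset.card_lt_card ⟨Finset.filter_subset _ _, fun hsub => ?_⟩
  have hT : T ∈ α := Finset.mem_of_mem_filter T ‹T ∈ maxElems α›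
  have := Finset.mem_filter.mp (hsub hT)
  exact ssubset_irrefl T this.2


lemma nested_empty (cs : CoxeterSystem M W) : Nested cs (∅ : Finset (Finset B)) := by
  rw [Nested]; left; rfl

lemma familySupport_pair (T₁ T₂ : Finset B) :
    familySupport ({T₁, T₂} : Finset (Finset B)) = T₁ ∪ T₂ := by
  simp [familySupport]

lemma maxElems_singleton (T : Finset B) :
    maxElems ({T} : Finset (Finset B)) = {T} := by
  ext X
  simp only [maxElems, Finset.mem_filter, Finset.mem_singleton]
  constructor
  · exact fun h => h.1
  · rintro rfl
    exact ⟨rfl, by rintro T' rfl; exact ssubset_irrefl _⟩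

lemma nested_singleton (cs : CoxeterSystem M W) (T : Finset B)
    (hS : IsSpherical cs T) (hI : DiagramIrreducible M T) :
    Nested cs ({T} : Finset (Finset B)) := by
  rw [Nested]; right
  have hmax := maxElems_singleton (B := B) T
  have hsup : familySupport ({T} : Finset (Finset B)) = T := by simp [familySupport]
  refine ⟨by rwa [hsup], ?_, ?_, ?_, ?_⟩
  · intro X hX; rw [hmax, Finset.mem_singleton] at hX; subst hX; exact hI
  · intro X hX Y hY hXY
    rw [hmax, Finset.mem_singleton] at hX hY
    exact absurd (hX.trans hY.symm) hXY
  · rw [hmax, hsup]; simp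
  · intro X hX
    have : (({T} : Finset (Finset B)).filter fun T' => T' ⊂ X) = ∅ := by
      rw [hmax, Finset.mem_singleton] at hX; subst hX
      ext Y
      simp only [Finset.mem_filter, Finset.mem_singleton, Finset.notMem_empty, iff_false,
        not_and]
      rintro rfl; exact ssubset_irrefl _
    rw [this]; exact nested_empty cs

lemma maxElems_pair_of_ssubset {T₁ T₂ : Finset B} (h : T₁ ⊂ T₂) :
    maxElems ({T₁, T₂} : Finset (Finset B)) = {T₂} := by
  ext X
  simp only [maxElems, Finset.mem_filter, Finset.mem_insert, Finset.mem_singleton]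
  constructor
  · rintro ⟨rfl | rfl, hmax⟩
    · exact absurd h (hmax T₂ (Or.inr rfl))
    · rfl
  · rintro rfl
    refine ⟨Or.inr rfl, ?_⟩
    rintro T' (rfl | rfl)
    · exact fun hc => ssubset_irrefl _ (hc.trans h)
    · exact ssubset_irrefl _

lemma maxElems_pair_of_incomparable {T₁ T₂ : Finset B}
    (h1 : ¬ T₁ ⊂ T₂) (h2 : ¬ T₂ ⊂ T₁) :
    maxElems ({T₁, T₂} : Finset (Finset B)) = {T₁, T₂} := by
  ext X
  simp only [maxElems, Finset.mem_filter, Finset.mem_insert, Finset.mem_singleton]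
  constructor
  · exact fun h => h.1
  · rintro (rfl | rfl)
    · exact ⟨Or.inl rfl, by rintro T' (rfl | rfl); exacts [ssubset_irrefl _, h1]⟩
    · exact ⟨Or.inr rfl, by rintro T' (rfl | rfl); exacts [h2, ssubset_irrefl _]⟩


lemma nested_pair_of_ssubset (cs : CoxeterSystem M W) {T₁ T₂ : Finset B} (hss : T₁ ⊂ T₂)
    (hs₁ : IsSpherical cs T₁) (hs₂ : IsSpherical cs T₂)
    (hi₁ : DiagramIrreducible M T₁) (hi₂ : DiagramIrreducible M T₂) :
    Nested cs ({T₁, T₂} : Finset (Finset B)) := by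
  rw [Nested]; right
  have hmax := maxElems_pair_of_ssubset hss
  have hsup : familySupport ({T₁, T₂} : Finset (Finset B)) = T₂ := by
    rw [familySupport_pair, Finset.union_eq_right.mpr hss.subset]
  refine ⟨by rwa [hsup], ?_, ?_, ?_, ?_⟩
  · intro X hX; rw [hmax, Finset.mem_singleton] at hX; subst hX; exact hi₂
  · intro X hX Y hY hXY
    rw [hmax, Finset.mem_singleton] at hX hY
    exact absurd (hX.trans hY.symm) hXY
  · rw [hmax, hsup]; simp
  · intro X hX
    rw [hmax, Finset.mem_singleton] at hX
    rw [hX]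
    have hfil : (({T₁, T₂} : Finset (Finset B)).filter fun T' => T' ⊂ T₂) = {T₁} := by
        ext Y
        simp only [Finset.mem_filter, Finset.mem_insert, Finset.mem_singleton]
        constructor
        · rintro ⟨rfl | rfl, hY⟩
          · rfl
          · exact (ssubset_irrefl _ hY).elim
        · rintro rfl; exact ⟨Or.inl rfl, hss⟩
    rw [hfil]
    exact nested_singleton cs T₁ hs₁ hi₁

/-- Two distinct irreducible spherical subsets `T₁, T₂` form a nested pair (a 1-simplex of
the subdivision `L_⊘`) if and only if they are comparable or orthogonal. -/
theorem nested_pair_iff_comparable_or_orthogonal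
    (cs : CoxeterSystem M W) (T₁ T₂ : Finset B) (hne₁ : T₁.Nonempty) (hne₂ : T₂.Nonempty)
    (hs₁ : IsSpherical cs T₁) (hs₂ : IsSpherical cs T₂)
    (hi₁ : DiagramIrreducible M T₁) (hi₂ : DiagramIrreducible M T₂)
    (h12 : T₁ ≠ T₂) :
    Nested cs {T₁, T₂} ↔
      (T₁ ⊆ T₂ ∨ T₂ ⊆ T₁ ∨
        (T₁ ∩ T₂ = ∅ ∧ IsSpherical cs (T₁ ∪ T₂) ∧
          ∀ s ∈ T₁, ∀ t ∈ T₂, M s t = 2)) := by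
  constructor
  · intro hN
    rw [Nested] at hN
    rcases hN with h | ⟨hsp, _, horth, _, _⟩
    · exact absurd h (by simp)
    by_cases h1 : T₁ ⊆ T₂
    · exact Or.inl h1
    by_cases h2 : T₂ ⊆ T₁
    · exact Or.inr (Or.inl h2)
    right; right
    have hmax := maxElems_pair_of_incomparable
      (fun hc => h1 hc.subset) (fun hc => h2 hc.subset)
    have hm1 : T₁ ∈ maxElems ({T₁, T₂} : Finset (Finset B)) := by rw [hmax]; simp
    have hm2 : T₂ ∈ maxElems ({T₁, T₂} : Finset (Finset B)) := by rw [hmax]; simp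
    obtain ⟨hd, hm⟩ := horth T₁ hm1 T₂ hm2 h12
    refine ⟨Finset.disjoint_iff_inter_eq_empty.mp hd, ?_, hm⟩
    rwa [familySupport_pair] at hsp
  · rintro (h | h | ⟨hd, hsp, hm⟩)
    · exact nested_pair_of_ssubset cs (lt_of_le_of_ne h h12) hs₁ hs₂ hi₁ hi₂
    · rw [Finset.pair_comm]
      exact nested_pair_of_ssubset cs (lt_of_le_of_ne h (Ne.symm h12)) hs₂ hs₁ hi₂ hi₁
    · have h1 : ¬ T₁ ⊂ T₂ := by
        intro hc
        obtain ⟨s, hs⟩ := hne₁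
        have : s ∈ T₁ ∩ T₂ := Finset.mem_inter.mpr ⟨hs, hc.subset hs⟩
        rw [hd] at this
        exact absurd this (Finset.notMem_empty s)
      have h2 : ¬ T₂ ⊂ T₁ := by
        intro hc
        obtain ⟨t, ht⟩ := hne₂
        have : t ∈ T₁ ∩ T₂ := Finset.mem_inter.mpr ⟨hc.subset ht, ht⟩
        rw [hd] at this
        exact absurd this (Finset.notMem_empty t)
      have hmax := maxElems_pair_of_incomparable h1 h2
      have e1 : (({T₁, T₂} : Finset (Finset B)).filter fun T' => T' ⊂ T₁) = ∅ := by
        ext Y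
        simp only [Finset.mem_filter, Finset.mem_insert, Finset.mem_singleton,
          Finset.notMem_empty, iff_false, not_and]
        rintro (rfl | rfl)
        exacts [ssubset_irrefl _, h2]
      have e2 : (({T₁, T₂} : Finset (Finset B)).filter fun T' => T' ⊂ T₂) = ∅ := by
        ext Y
        simp only [Finset.mem_filter, Finset.mem_insert, Finset.mem_singleton,
          Finset.notMem_empty, iff_false, not_and]
        rintro (rfl | rfl)
        exacts [h1, ssubset_irrefl _]
      rw [Nested]; right
      refine ⟨by rwa [familySupport_pair], ?_, ?_, ?_, ?_⟩
      · intro X hX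
        rw [hmax] at hX
        simp only [Finset.mem_insert, Finset.mem_singleton] at hX
        rcases hX with rfl | rfl
        exacts [hi₁, hi₂]
      · intro X hX Y hY hXY
        rw [hmax] at hX hY
        simp only [Finset.mem_insert, Finset.mem_singleton] at hX hY
        have hdis : Disjoint T₁ T₂ := Finset.disjoint_iff_inter_eq_empty.mpr hd
        have hm' : ∀ s ∈ T₂, ∀ t ∈ T₁, M s t = 2 := fun s hs t ht => by
          rw [M.symmetric]; exact hm t ht s hs
        rcases hX with rfl | rfl <;> rcases hY with rfl | rfl
        · exact absurd rfl hXY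
        · exact ⟨hdis, hm⟩
        · exact ⟨hdis.symm, hm'⟩
        · exact absurd rfl hXY
      · rw [hmax, familySupport_pair]; simp
      · intro X hX
        rw [hmax] at hX
        simp only [Finset.mem_insert, Finset.mem_singleton] at hX
        rcases hX with rfl | rfl
        · rw [e1]; exact nested_empty cs
        · rw [e2]; exact nested_empty cs
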